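/- If u ≥ 0, then the maximal real part over the spectrum of J(u) equals −d + uK: max_{η ∈ σ(J(u))} Re(η) = −d + uK. -/

import Mathlib

open Matrix Complex Polynomial
open scoped Kronecker

/-- The complex spectrum of a real square matrix: the set of complex roots of its
characteristic polynomial. -/
noncomputable def specC {n : Type*} [Fintype n] [DecidableEq n]
    (M : Matrix n n ℝ) : Set ℂ :=
  {z : ℂ | ((M.map (Complex.ofReal)).charpoly).IsRoot z}

/-- The Jacobian matrix `J(u)` of the belief dynamics at the origin. -/
noncomputable def Jmat {Na No : ℕ}
    (Aa : Matrix (Fin Na) (Fin Na) ℝ) (Ao : Matrix (Fin No) (Fin No) ℝ)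
    (d u α γ β δ : ℝ) : Matrix (Fin Na × Fin No) (Fin Na × Fin No) ℝ :=
  (-d + u * α) • (1 : Matrix (Fin Na × Fin No) (Fin Na × Fin No) ℝ)
    + (u * γ) • (Aa ⊗ₖ (1 : Matrix (Fin No) (Fin No) ℝ))
    + (u * β) • ((1 : Matrix (Fin Na) (Fin Na) ℝ) ⊗ₖ Ao)
    + (u * δ) • (Aa ⊗ₖ Ao)

lemma isRoot_charpoly_iff_det {n : Type*} [Fintype n] [DecidableEq n]
    (M : Matrix n n ℂ) (z : ℂ) :
    M.charpoly.IsRoot z ↔ (z • (1 : Matrix n n ℂ) - M).det = 0 := by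
  rw [Polynomial.IsRoot, Matrix.charpoly, _root_.eval_det, matPolyEquiv_charmatrix]
  congr! 2
  rw [Polynomial.eval_sub, Polynomial.eval_X, Polynomial.eval_C]
  congr 1
  simp [Matrix.scalar, Matrix.smul_one_eq_diagonal]

lemma isRoot_charpoly_iff {n : Type*} [Fintype n] [DecidableEq n]
    (M : Matrix n n ℂ) (z : ℂ) :
    M.charpoly.IsRoot z ↔ ∃ v ≠ 0, M *ᵥ v = z • v := by
  rw [isRoot_charpoly_iff_det, ← Matrix.exists_mulVec_eq_zero_iff]
  refine exists_congr fun v => and_congr_right fun _ => ?_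
  rw [Matrix.sub_mulVec, Matrix.smul_mulVec, Matrix.one_mulVec, sub_eq_zero, eq_comm]

lemma hasEigenvalue_mulVecLin_iff {n : Type*} [Fintype n] [DecidableEq n]
    (M : Matrix n n ℂ) (z : ℂ) :
    Module.End.HasEigenvalue (Matrix.mulVecLin M) z ↔ M.charpoly.IsRoot z := by
  rw [isRoot_charpoly_iff]
  constructor
  · intro h
    obtain ⟨v, hv⟩ := h.exists_hasEigenvector
    exact ⟨v, hv.2, by simpa using hv.apply_eq_smul⟩
  · rintro ⟨v, hv0, hv⟩
    exact Module.End.hasEigenvalue_of_hasEigenvector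
      ⟨Module.End.mem_eigenspace_iff.mpr (by simpa using hv), hv0⟩

lemma kron_mulVec {m n : Type*} [Fintype m] [Fintype n] (X : Matrix m m ℂ) (Y : Matrix n n ℂ)
    (v : m → ℂ) (w : n → ℂ) :
    (X ⊗ₖ Y) *ᵥ (fun p : m × n => v p.1 * w p.2) = fun q => (X *ᵥ v) q.1 * (Y *ᵥ w) q.2 := by
  funext q
  simp only [Matrix.mulVec, dotProduct, Fintype.sum_prod_type,
    Matrix.kroneckerMap_apply, Finset.sum_mul_sum]
  refine Finset.sum_congr rfl fun k _ => Finset.sum_congr rfl fun l _ => by ring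

lemma sub_kron {l m n p : Type*} (A B : Matrix l m ℂ) (C : Matrix n p ℂ) :
    (A - B) ⊗ₖ C = A ⊗ₖ C - B ⊗ₖ C := by
  ext ⟨i, j⟩ ⟨k, l⟩; simp [Matrix.kroneckerMap_apply, sub_mul]

lemma kron_sub {l m n p : Type*} (A : Matrix l m ℂ) (B C : Matrix n p ℂ) :
    A ⊗ₖ (B - C) = A ⊗ₖ B - A ⊗ₖ C := by
  ext ⟨i, j⟩ ⟨k, l⟩; simp [Matrix.kroneckerMap_apply, mul_sub]

lemma isRoot_kron_left {Na No : ℕ} (hNo : 1 ≤ No) (A : Matrix (Fin Na) (Fin Na) ℂ) (z : ℂ)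
    (h : (A ⊗ₖ (1 : Matrix (Fin No) (Fin No) ℂ)).charpoly.IsRoot z) :
    A.charpoly.IsRoot z := by
  rw [isRoot_charpoly_iff_det] at h ⊢
  have hk : z • (1 : Matrix (Fin Na × Fin No) (Fin Na × Fin No) ℂ)
      - A ⊗ₖ (1 : Matrix (Fin No) (Fin No) ℂ)
      = (z • (1 : Matrix (Fin Na) (Fin Na) ℂ) - A) ⊗ₖ (1 : Matrix (Fin No) (Fin No) ℂ) := by
    rw [sub_kron, Matrix.smul_kronecker, Matrix.one_kronecker_one]
  rw [hk, Matrix.det_kronecker, Matrix.det_one, one_pow, mul_one, pow_eq_zero_iff] at h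
  · exact h
  · simp; omega

lemma isRoot_kron_right {Na No : ℕ} (hNa : 1 ≤ Na) (B : Matrix (Fin No) (Fin No) ℂ) (z : ℂ)
    (h : ((1 : Matrix (Fin Na) (Fin Na) ℂ) ⊗ₖ B).charpoly.IsRoot z) :
    B.charpoly.IsRoot z := by
  rw [isRoot_charpoly_iff_det] at h ⊢
  have hk : z • (1 : Matrix (Fin Na × Fin No) (Fin Na × Fin No) ℂ)
      - (1 : Matrix (Fin Na) (Fin Na) ℂ) ⊗ₖ B
      = (1 : Matrix (Fin Na) (Fin Na) ℂ) ⊗ₖ (z • (1 : Matrix (Fin No) (Fin No) ℂ) - B) := by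
    rw [kron_sub, Matrix.kronecker_smul, Matrix.one_kronecker_one]
  rw [hk, Matrix.det_kronecker, Matrix.det_one, one_pow, one_mul, pow_eq_zero_iff] at h
  · exact h
  · simp; omega

lemma nilp_comb {M : Type*} [AddCommGroup M] [Module ℂ M]
    (S T : Module.End ℂ M) (hST : Commute S T) (a b e : ℂ) (m : M)
    (k1 k2 : ℕ) (h1 : (S ^ k1) m = 0) (h2 : (T ^ k2) m = 0) :
    ((a • S + b • T + e • (S * T)) ^ (k1 + k2)) m = 0 := by
  have hW : a • S + b • T + e • (S * T) = (a • 1 + e • T) * S + b • T := by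
    rw [add_mul, smul_mul_assoc, one_mul, smul_mul_assoc, hST.symm.eq]
    abel
  have hcomm1 : Commute (a • 1 + e • T) S :=
    ((Commute.one_left S).smul_left a).add_left (hST.symm.smul_left e)
  have hXT : Commute (a • 1 + e • T) T :=
    ((Commute.one_left T).smul_left a).add_left ((Commute.refl T).smul_left e)
  have hcomm2 : Commute ((a • 1 + e • T) * S) (b • T) := (hXT.mul_left hST).smul_right b
  rw [hW, hcomm2.add_pow]
  rw [LinearMap.coe_sum, Finset.sum_apply]
  refine Finset.sum_eq_zero fun i hi => ?_
  rw [Finset.mem_range, Nat.lt_succ_iff] at hi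
  have hc : ((k1 + k2).choose i : Module.End ℂ M) m = ((k1 + k2).choose i : ℕ) • m := by
    simp [Module.End.natCast_apply]
  rw [Module.End.mul_apply, Module.End.mul_apply, hc]
  by_cases hik : k2 ≤ k1 + k2 - i
  · have hT : ((b • T) ^ (k1 + k2 - i)) (((k1 + k2).choose i : ℕ) • m) = 0 := by
      have hsplit : T ^ (k1 + k2 - i) = T ^ (k1 + k2 - i - k2) * T ^ k2 := by
        rw [← pow_add]; congr 1; omega
      rw [_root_.smul_pow, LinearMap.smul_apply, LinearMap.map_smul_of_tower, hsplit,
        Module.End.mul_apply, h2, map_zero, smul_zero, smul_zero]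
    rw [hT, map_zero]
  · have hik1 : k1 ≤ i := by omega
    have hWi : ((a • 1 + e • T) * S) ^ i = (a • 1 + e • T) ^ i * S ^ i := hcomm1.mul_pow i
    have hSb : Commute (S ^ i) ((b • T) ^ (k1 + k2 - i)) := (hST.smul_right b).pow_pow i _
    have hSm : (S ^ i) (((k1 + k2).choose i : ℕ) • m) = 0 := by
      have hiS : S ^ i = S ^ (i - k1) * S ^ k1 := by rw [← pow_add]; congr 1; omega
      rw [LinearMap.map_smul_of_tower, hiS, Module.End.mul_apply, h1, map_zero, smul_zero]
    rw [← Module.End.mul_apply, hWi, mul_assoc, hSb.eq, Module.End.mul_apply,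
      Module.End.mul_apply, hSm, map_zero, map_zero]

lemma re_c (d u α γ β δ : ℝ) (l m : ℂ) :
    (((-d + u*α : ℝ) : ℂ) + ((u*γ:ℝ):ℂ) * l + ((u*β:ℝ):ℂ) * m + ((u*δ:ℝ):ℂ) * (l * m)).re
    = -d + u * (((α:ℂ) + (γ:ℂ)*l + (β:ℂ)*m + (δ:ℂ)*l*m).re) := by
  simp [Complex.add_re, Complex.mul_re, Complex.ofReal_re, Complex.ofReal_im]
  ring

/-- If `u ≥ 0` and `K` is the maximum of `Re(α + γλ + βμ + δλμ)` over
`λ ∈ σ(A_a), μ ∈ σ(A_o)`, then the maximal real part over `σ(J(u))` is `−d + uK`. -/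
theorem max_real_part_spectrum {Na No : ℕ} (hNa : 1 ≤ Na) (hNo : 1 ≤ No)
    (Aa : Matrix (Fin Na) (Fin Na) ℝ) (Ao : Matrix (Fin No) (Fin No) ℝ)
    (d u α γ β δ K : ℝ) (hu : 0 ≤ u)
    (hK : IsGreatest {x : ℝ | ∃ l ∈ specC Aa, ∃ m ∈ specC Ao,
        x = ((α : ℂ) + (γ : ℂ) * l + (β : ℂ) * m + (δ : ℂ) * l * m).re} K) :
    IsGreatest {x : ℝ | ∃ η ∈ specC (Jmat Aa Ao d u α γ β δ), x = η.re} (-d + u * K) := by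
  classical
  set A' : Matrix (Fin Na) (Fin Na) ℂ := Aa.map Complex.ofReal with hA'
  set B' : Matrix (Fin No) (Fin No) ℂ := Ao.map Complex.ofReal with hB'
  set J' : Matrix (Fin Na × Fin No) (Fin Na × Fin No) ℂ :=
    (Jmat Aa Ao d u α γ β δ).map Complex.ofReal with hJ'def
  have hJ' : J' = ((-d + u*α : ℝ) : ℂ) • (1 : Matrix (Fin Na × Fin No) (Fin Na × Fin No) ℂ)
      + ((u*γ:ℝ):ℂ) • (A' ⊗ₖ (1 : Matrix (Fin No) (Fin No) ℂ))
      + ((u*β:ℝ):ℂ) • ((1 : Matrix (Fin Na) (Fin Na) ℂ) ⊗ₖ B')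
      + ((u*δ:ℝ):ℂ) • (A' ⊗ₖ B') := by
    ext ⟨i, j⟩ ⟨k, l⟩
    simp only [hJ'def, hA', hB', Jmat, Matrix.map_apply, Matrix.add_apply, Matrix.smul_apply,
      Matrix.kroneckerMap_apply, Matrix.one_apply, Prod.mk.injEq, smul_eq_mul,
      mul_ite, mul_one, mul_zero, ite_and]
    push_cast
    split_ifs <;> push_cast <;> ring
  constructor
  · -- membership
    obtain ⟨l, hl, m, hm, hKeq⟩ := hK.1
    obtain ⟨v, hv0, hv⟩ := (isRoot_charpoly_iff A' l).mp hl
    obtain ⟨w, hw0, hw⟩ := (isRoot_charpoly_iff B' m).mp hm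
    set c : ℂ := ((-d + u*α : ℝ) : ℂ) + ((u*γ:ℝ):ℂ) * l + ((u*β:ℝ):ℂ) * m
        + ((u*δ:ℝ):ℂ) * (l * m) with hc
    refine ⟨c, ?_, by rw [hc, re_c, ← hKeq]⟩
    show J'.charpoly.IsRoot c
    rw [isRoot_charpoly_iff]
    refine ⟨fun p => v p.1 * w p.2, ?_, ?_⟩
    · obtain ⟨i, hi⟩ := Function.ne_iff.mp hv0
      obtain ⟨j, hj⟩ := Function.ne_iff.mp hw0
      exact Function.ne_iff.mpr ⟨(i, j), by simpa using mul_ne_zero hi hj⟩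
    · rw [hJ', Matrix.add_mulVec, Matrix.add_mulVec, Matrix.add_mulVec,
        Matrix.smul_mulVec, Matrix.smul_mulVec, Matrix.smul_mulVec,
        Matrix.smul_mulVec, kron_mulVec, kron_mulVec, kron_mulVec,
        Matrix.one_mulVec, hv, hw]
      funext q
      simp only [Pi.add_apply, Pi.smul_apply, smul_eq_mul, Matrix.one_mulVec, hc]
      ring
  · -- upper bound
    rintro x ⟨η, hη, rfl⟩
    replace hη : J'.charpoly.IsRoot η := hη
    set P : Module.End ℂ (Fin Na × Fin No → ℂ) :=
      Matrix.mulVecLin (A' ⊗ₖ (1 : Matrix (Fin No) (Fin No) ℂ)) with hP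
    set Q : Module.End ℂ (Fin Na × Fin No → ℂ) :=
      Matrix.mulVecLin ((1 : Matrix (Fin Na) (Fin Na) ℂ) ⊗ₖ B') with hQ
    set F : Module.End ℂ (Fin Na × Fin No → ℂ) := Matrix.mulVecLin J' with hF0
    have hmulPQ : P * Q = Matrix.mulVecLin (A' ⊗ₖ B') := by
      rw [hP, hQ, Module.End.mul_eq_comp, ← Matrix.mulVecLin_mul, ← Matrix.mul_kronecker_mul,
        mul_one, one_mul]
    have hmulQP : Q * P = Matrix.mulVecLin (A' ⊗ₖ B') := by
      rw [hP, hQ, Module.End.mul_eq_comp, ← Matrix.mulVecLin_mul, ← Matrix.mul_kronecker_mul,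
        mul_one, one_mul]
    have hPQ : Commute P Q := by rw [Commute, SemiconjBy, hmulPQ, hmulQP]
    have hF : F = ((-d + u*α : ℝ) : ℂ) • (1 : Module.End ℂ (Fin Na × Fin No → ℂ))
        + ((u*γ:ℝ):ℂ) • P + ((u*β:ℝ):ℂ) • Q + ((u*δ:ℝ):ℂ) • (P * Q) := by
      rw [hmulPQ, hF0, hJ']
      refine LinearMap.ext fun v => ?_
      simp only [Matrix.mulVecLin_apply, LinearMap.add_apply, LinearMap.smul_apply,
        Module.End.one_apply, Matrix.add_mulVec, Matrix.smul_mulVec, Matrix.one_mulVec,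
        hP, hQ]
    have hEig : F.HasEigenvalue η := (hasEigenvalue_mulVecLin_iff J' η).mpr hη
    set f : Bool → Module.End ℂ (Fin Na × Fin No → ℂ) := fun i => bif i then P else Q with hf
    have hTop : ⨆ χ : Bool → ℂ, ⨅ i, (f i).maxGenEigenspace (χ i) = ⊤ := by
      apply Module.End.iSup_iInf_maxGenEigenspace_eq_top_of_iSup_maxGenEigenspace_eq_top_of_commute
      · intro i j hij
        cases i <;> cases j <;> simp_all [hf] <;> exact hPQ.symm
      · intro i
        exact Module.End.iSup_maxGenEigenspace_eq_top _
    set cfun : (Bool → ℂ) → ℂ := fun χ => ((-d + u*α : ℝ) : ℂ) + ((u*γ:ℝ):ℂ) * χ true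
        + ((u*β:ℝ):ℂ) * χ false + ((u*δ:ℝ):ℂ) * (χ true * χ false) with hcfun
    have hjoint : ∀ χ : Bool → ℂ,
        (⨅ i, (f i).maxGenEigenspace (χ i)) ≤ F.maxGenEigenspace (cfun χ) := by
      intro χ m hm
      have hmP : m ∈ P.maxGenEigenspace (χ true) := Submodule.mem_iInf _ |>.mp hm true
      have hmQ : m ∈ Q.maxGenEigenspace (χ false) := Submodule.mem_iInf _ |>.mp hm false
      obtain ⟨k1, h1⟩ := (Module.End.mem_maxGenEigenspace _ _ _).mp hmP
      obtain ⟨k2, h2⟩ := (Module.End.mem_maxGenEigenspace _ _ _).mp hmQ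
      rw [Module.End.mem_maxGenEigenspace]
      refine ⟨k1 + k2, ?_⟩
      set S : Module.End ℂ (Fin Na × Fin No → ℂ) := P - χ true • 1 with hS
      set T : Module.End ℂ (Fin Na × Fin No → ℂ) := Q - χ false • 1 with hT
      have hSTc : Commute S T := by
        refine (hPQ.sub_left ((Commute.one_left Q).smul_left _)).sub_right
          ((Commute.one_right _).smul_right _)
      have hid : F - cfun χ • (1 : Module.End ℂ (Fin Na × Fin No → ℂ))
          = (((u*γ:ℝ):ℂ) + ((u*δ:ℝ):ℂ) * χ false) • S
            + (((u*β:ℝ):ℂ) + ((u*δ:ℝ):ℂ) * χ true) • T + ((u*δ:ℝ):ℂ) • (S * T) := by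
        have h1' : S * T = P * Q - χ false • P - χ true • Q
            + (χ true * χ false) • (1 : Module.End ℂ (Fin Na × Fin No → ℂ)) := by
          rw [hS, hT]
          simp only [sub_mul, mul_sub, smul_mul_assoc, mul_smul_comm, one_mul, mul_one,
            smul_smul]
          module
        rw [hF, h1', hS, hT, hcfun]
        module
      rw [hid]
      exact nilp_comb S T hSTc _ _ _ m k1 k2 h1 h2
    have hmaxne : F.maxGenEigenspace η ≠ ⊥ := by
      obtain ⟨v, hv⟩ := hEig.exists_hasEigenvector
      refine Submodule.ne_bot_iff _ |>.mpr ⟨v, ?_, hv.2⟩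
      rw [Module.End.mem_maxGenEigenspace]
      exact ⟨1, by simp [pow_one, LinearMap.sub_apply, hv.apply_eq_smul]⟩
    obtain ⟨χ, hχne, hχc⟩ : ∃ χ : Bool → ℂ,
        (⨅ i, (f i).maxGenEigenspace (χ i)) ≠ ⊥ ∧ cfun χ = η := by
      by_contra hcon
      push_neg at hcon
      have hle : (⊤ : Submodule ℂ (Fin Na × Fin No → ℂ))
          ≤ ⨆ z ∈ {w : ℂ | w ≠ η}, F.maxGenEigenspace z := by
        rw [← hTop]
        refine iSup_le fun χ => ?_
        by_cases hb : (⨅ i, (f i).maxGenEigenspace (χ i)) = ⊥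
        · rw [hb]; exact bot_le
        · exact le_trans (hjoint χ) (le_biSup _ (hcon χ hb))
      have hdisj := (Module.End.independent_maxGenEigenspace F).disjoint_biSup
        (show η ∉ {w : ℂ | w ≠ η} by simp)
      exact hmaxne (by
        have := hdisj.mono_right hle
        simpa using this.eq_bot_of_le le_top)
    have hmP : P.maxGenEigenspace (χ true) ≠ ⊥ := by
      intro hbot
      apply hχne
      rw [eq_bot_iff]
      exact le_trans (iInf_le _ true) (le_of_eq hbot)
    have hmQ : Q.maxGenEigenspace (χ false) ≠ ⊥ := by
      intro hbot
      apply hχne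
      rw [eq_bot_iff]
      exact le_trans (iInf_le _ false) (le_of_eq hbot)
    have hEigP : P.HasEigenvalue (χ true) := by
      obtain ⟨v, hvmem, hv0⟩ := Submodule.ne_bot_iff _ |>.mp hmP
      obtain ⟨k, hk⟩ := (Module.End.mem_maxGenEigenspace _ _ _).mp hvmem
      have hk0 : k ≠ 0 := by rintro rfl; simp at hk; exact hv0 hk
      refine Module.End.hasEigenvalue_of_hasGenEigenvalue (k := k) ?_
      refine Submodule.ne_bot_iff _ |>.mpr ⟨v, ?_, hv0⟩
      exact Module.End.mem_genEigenspace_nat.mpr hk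
    have hEigQ : Q.HasEigenvalue (χ false) := by
      obtain ⟨v, hvmem, hv0⟩ := Submodule.ne_bot_iff _ |>.mp hmQ
      obtain ⟨k, hk⟩ := (Module.End.mem_maxGenEigenspace _ _ _).mp hvmem
      have hk0 : k ≠ 0 := by rintro rfl; simp at hk; exact hv0 hk
      refine Module.End.hasEigenvalue_of_hasGenEigenvalue (k := k) ?_
      refine Submodule.ne_bot_iff _ |>.mpr ⟨v, ?_, hv0⟩
      exact Module.End.mem_genEigenspace_nat.mpr hk
    have hlA : χ true ∈ specC Aa :=
      isRoot_kron_left hNo A' _ ((hasEigenvalue_mulVecLin_iff _ _).mp hEigP)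
    have hmB : χ false ∈ specC Ao :=
      isRoot_kron_right hNa B' _ ((hasEigenvalue_mulVecLin_iff _ _).mp hEigQ)
    have hre : η.re = -d + u * (((α:ℂ) + (γ:ℂ) * χ true + (β:ℂ) * χ false
        + (δ:ℂ) * χ true * χ false).re) := by
      rw [← hχc, hcfun]
      have := re_c d u α γ β δ (χ true) (χ false)
      rw [this]
    rw [hre]
    have hmem : (((α:ℂ) + (γ:ℂ) * χ true + (β:ℂ) * χ false
        + (δ:ℂ) * χ true * χ false).re) ≤ K :=
      hK.2 ⟨χ true, hlA, χ false, hmB, rfl⟩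
    have := mul_le_mul_of_nonneg_left hmem hu
    linarith
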